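/- The function Y ↦ log det(Σ_T - YΣ₀⁻¹Y') is concave on the convex open set {Y ∈ ℝ^{n×n} : Σ_T - YΣ₀⁻¹Y' ≻ 0}, where Σ₀, Σ_T are symmetric positive definite. -/

import Mathlib

open Matrix Finset

variable {m : Type*} [Fintype m] [DecidableEq m]

lemma my_conj_posDef {A C : Matrix m m ℝ} (hA : A.PosDef) (hC : IsUnit C.det) :
    (Cᴴ * A * C).PosDef := by
  refine .of_dotProduct_mulVec_pos (hA.posSemidef.conjTranspose_mul_mul_same C).1 fun x hx => ?_
  have hCu : IsUnit C := (Matrix.isUnit_iff_isUnit_det _).2 hC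
  have h : C *ᵥ x ≠ 0 := by
    intro h0
    exact hx ((Matrix.mulVec_injective_iff_isUnit.mpr hCu) (by simpa using h0))
  simpa only [star_mulVec, dotProduct_mulVec, vecMul_vecMul] using hA.dotProduct_mulVec_pos h

lemma my_smul_posDef {A : Matrix m m ℝ} (hA : A.PosDef) {a : ℝ} (ha : 0 < a) :
    (a • A).PosDef := by
  refine .of_dotProduct_mulVec_pos (by simpa [Matrix.IsHermitian] using congrArg (a • ·) hA.1) fun x hx => ?_
  have := hA.dotProduct_mulVec_pos hx
  simp only [smul_mulVec, dotProduct_smul, smul_eq_mul]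
  positivity

lemma my_smul_posSemidef {A : Matrix m m ℝ} (hA : A.PosSemidef) {a : ℝ} (ha : 0 ≤ a) :
    (a • A).PosSemidef := by
  refine .of_dotProduct_mulVec_nonneg (by simpa [Matrix.IsHermitian] using congrArg (a • ·) hA.1) fun x => ?_
  have := hA.dotProduct_mulVec_nonneg x
  simp only [smul_mulVec, dotProduct_smul, smul_eq_mul]
  positivity

lemma my_det_smul_one_add_smul {M : Matrix m m ℝ} (hM : M.IsHermitian) (α β : ℝ) :
    (α • (1 : Matrix m m ℝ) + β • M).det = ∏ i, (α + β * hM.eigenvalues i) := by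
  have hU := (Matrix.mem_unitaryGroup_iff).mp hM.eigenvectorUnitary.2
  set U : Matrix m m ℝ := (hM.eigenvectorUnitary : Matrix m m ℝ) with hUdef
  set D : Matrix m m ℝ := Matrix.diagonal (RCLike.ofReal ∘ hM.eigenvalues) with hDdef
  have key : α • (1 : Matrix m m ℝ) + β • M = U * (α • 1 + β • D) * star U := by
    rw [Matrix.mul_add, Matrix.add_mul, mul_smul_comm, smul_mul_assoc,
      Matrix.mul_one, hU, mul_smul_comm, smul_mul_assoc]
    conv_lhs => rw [hM.spectral_theorem, Unitary.conjStarAlgAut_apply]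
  rw [key, Matrix.det_mul_right_comm, hU, Matrix.one_mul]
  have : α • (1 : Matrix m m ℝ) + β • D
      = Matrix.diagonal (fun i => α + β * hM.eigenvalues i) := by
    rw [hDdef, Matrix.smul_one_eq_diagonal]
    ext i j
    by_cases h : i = j <;> simp [Matrix.diagonal, h]
  rw [this, Matrix.det_diagonal]

open scoped MatrixOrder in
lemma my_sqrt_facts {A : Matrix m m ℝ} (hA : A.PosDef) :
    ∃ S : Matrix m m ℝ, S.IsHermitian ∧ S * S = A ∧ IsUnit S.det ∧ Sᴴ = S ∧ S⁻¹ᴴ = S⁻¹ := by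
  have hsq : CFC.sqrt A * CFC.sqrt A = A := CFC.sqrt_mul_sqrt_self A hA.posSemidef.nonneg
  have hH : (CFC.sqrt A).IsHermitian := (CFC.sqrt_nonneg A).posSemidef.1
  refine ⟨CFC.sqrt A, hH, hsq,
    ?_, hH, ?_⟩
  · have h : (CFC.sqrt A).det * (CFC.sqrt A).det = A.det := by
      rw [← Matrix.det_mul, hsq]
    have : (CFC.sqrt A).det ≠ 0 := by
      intro h0; rw [h0, mul_zero] at h; exact hA.det_pos.ne h
    exact this.isUnit
  · rw [Matrix.conjTranspose_nonsing_inv, hH]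

lemma my_det_le_det_add {A P : Matrix m m ℝ} (hA : A.PosDef) (hP : P.PosSemidef) :
    A.det ≤ (A + P).det := by
  obtain ⟨S, hSh, hSS, hSdet, hSH, hSiH⟩ := my_sqrt_facts hA
  have hS1 : S * S⁻¹ = 1 := Matrix.mul_nonsing_inv S hSdet
  have hS2 : S⁻¹ * S = 1 := Matrix.nonsing_inv_mul S hSdet
  set M : Matrix m m ℝ := S⁻¹ * P * S⁻¹ᴴ with hMdef
  have hMpsd : M.PosSemidef := hP.mul_mul_conjTranspose_same S⁻¹
  have key : A + P = S * (1 + M) * S := by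
    rw [Matrix.mul_add, Matrix.add_mul, Matrix.mul_one, hSS, hMdef, hSiH]
    congr 1
    symm
    calc S * (S⁻¹ * P * S⁻¹) * S = (S * S⁻¹) * P * (S⁻¹ * S) := by
          simp only [Matrix.mul_assoc]
      _ = P := by rw [hS1, hS2, Matrix.one_mul, Matrix.mul_one]
  have hdet1 : (1 : ℝ) ≤ (1 + M).det := by
    have h1 : (1 : Matrix m m ℝ) + M = (1:ℝ) • 1 + (1:ℝ) • M := by simp
    rw [h1, my_det_smul_one_add_smul hMpsd.1]
    calc (1:ℝ) = ∏ _i : m, (1:ℝ) := by simp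
      _ ≤ ∏ i, (1 + 1 * hMpsd.1.eigenvalues i) := by
          apply Finset.prod_le_prod (by simp)
          intro i _
          have := hMpsd.eigenvalues_nonneg i
          linarith
  calc A.det = A.det * 1 := (mul_one _).symm
    _ ≤ A.det * (1 + M).det := by
        exact mul_le_mul_of_nonneg_left hdet1 hA.det_pos.le
    _ = (A + P).det := by
        rw [key, Matrix.det_mul, Matrix.det_mul]
        have : S.det * S.det = A.det := by rw [← Matrix.det_mul, hSS]
        rw [← this]; ring

lemma my_logdet_combo {A B : Matrix m m ℝ} (hA : A.PosDef) (hB : B.PosDef) {a b : ℝ}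
    (ha : 0 < a) (hb : 0 < b) (hab : a + b = 1) :
    a * Real.log A.det + b * Real.log B.det ≤ Real.log (a • A + b • B).det := by
  obtain ⟨S, hSh, hSS, hSdet, hSH, hSiH⟩ := my_sqrt_facts hA
  have hS1 : S * S⁻¹ = 1 := Matrix.mul_nonsing_inv S hSdet
  have hS2 : S⁻¹ * S = 1 := Matrix.nonsing_inv_mul S hSdet
  have hSidet : IsUnit S⁻¹.det := (Matrix.isUnit_nonsing_inv_det_iff).2 hSdet
  set M : Matrix m m ℝ := S⁻¹ᴴ * B * S⁻¹ with hMdef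
  have hMpd : M.PosDef := my_conj_posDef hB hSidet
  have hSBS : S * M * S = B := by
    rw [hMdef, hSiH]
    calc S * (S⁻¹ * B * S⁻¹) * S = (S * S⁻¹) * B * (S⁻¹ * S) := by
          simp only [Matrix.mul_assoc]
      _ = B := by rw [hS1, hS2, Matrix.one_mul, Matrix.mul_one]
  have key : a • A + b • B = S * (a • 1 + b • M) * S := by
    rw [Matrix.mul_add, Matrix.add_mul, mul_smul_comm, smul_mul_assoc, Matrix.mul_one,
      mul_smul_comm, smul_mul_assoc, hSS, hSBS]
  have hdetA : S.det * S.det = A.det := by rw [← Matrix.det_mul, hSS]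
  have hdetM : M.det = B.det / A.det := by
    have h0 : S.det * M.det * S.det = B.det := by
      rw [← Matrix.det_mul, ← Matrix.det_mul, hSBS]
    have h1 : M.det * A.det = B.det := by rw [← hdetA]; linear_combination h0
    rw [eq_div_iff hA.det_pos.ne']; exact h1
  have hdetmix : (a • A + b • B).det = A.det * (a • (1:Matrix m m ℝ) + b • M).det := by
    rw [key, Matrix.det_mul, Matrix.det_mul, ← hdetA]; ring
  have heig := my_det_smul_one_add_smul hMpd.1 a b
  -- pointwise inequality
  have hpt : ∀ i, b * Real.log (hMpd.1.eigenvalues i) ≤ Real.log (a + b * hMpd.1.eigenvalues i) := by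
    intro i
    have hμ : 0 < hMpd.1.eigenvalues i := hMpd.eigenvalues_pos i
    have hgm : hMpd.1.eigenvalues i ^ b ≤ a + b * hMpd.1.eigenvalues i := by
      have := Real.geom_mean_le_arith_mean2_weighted ha.le hb.le zero_le_one hμ.le hab
      simpa using this
    calc b * Real.log (hMpd.1.eigenvalues i) = Real.log (hMpd.1.eigenvalues i ^ b) :=
          (Real.log_rpow hμ b).symm
      _ ≤ Real.log (a + b * hMpd.1.eigenvalues i) :=
          Real.log_le_log (Real.rpow_pos_of_pos hμ b) hgm
  have hMdet2 : M.det = ∏ i, hMpd.1.eigenvalues i := by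
    simpa using hMpd.1.det_eq_prod_eigenvalues
  have hsum : b * Real.log M.det ≤ Real.log (a • (1:Matrix m m ℝ) + b • M).det := by
    rw [heig, hMdet2,
      Real.log_prod (fun i _ => (hMpd.eigenvalues_pos i).ne'),
      Real.log_prod (fun i _ => by have := hMpd.eigenvalues_pos i; positivity),
      Finset.mul_sum]
    exact Finset.sum_le_sum fun i _ => hpt i
  have hlogM : Real.log M.det = Real.log B.det - Real.log A.det := by
    rw [hdetM, Real.log_div hB.det_pos.ne' hA.det_pos.ne']
  rw [hdetmix, Real.log_mul hA.det_pos.ne' (by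
    have : (0:ℝ) < (a • (1:Matrix m m ℝ) + b • M).det := by
      have hpd : (a • (1:Matrix m m ℝ) + b • M).PosDef :=
        (my_smul_posDef Matrix.PosDef.one ha).add_posSemidef (my_smul_posSemidef hMpd.posSemidef hb.le)
      exact hpd.det_pos
    exact this.ne')]
  have := hsum
  rw [hlogM] at this
  have expand : a * Real.log A.det + b * Real.log B.det
      = Real.log A.det + b * (Real.log B.det - Real.log A.det) := by
    linear_combination Real.log A.det * hab
  rw [expand]
  linarith [this]

lemma my_combo_posDef {A B : Matrix m m ℝ} (hA : A.PosDef) (hB : B.PosDef) {a b : ℝ}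
    (ha : 0 ≤ a) (hb : 0 ≤ b) (hab : a + b = 1) : (a • A + b • B).PosDef := by
  rcases ha.eq_or_lt with h | h
  · obtain rfl : a = 0 := h.symm
    obtain rfl : b = 1 := by linarith
    simpa using hB
  · rcases hb.eq_or_lt with h2 | h2
    · obtain rfl : b = 0 := h2.symm
      obtain rfl : a = 1 := by linarith
      simpa using hA
    · exact (my_smul_posDef hA h).add (my_smul_posDef hB h2)

theorem stmt_11 {n : ℕ} (S0 ST : Matrix (Fin n) (Fin n) ℝ)
    (hS0 : S0.PosDef) (hS0sym : S0ᵀ = S0)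
    (hST : ST.PosDef) (hSTsym : STᵀ = ST) :
    ConcaveOn ℝ {Y : Matrix (Fin n) (Fin n) ℝ | (ST - Y * S0⁻¹ * Yᵀ).PosDef}
      (fun Y => Real.log (ST - Y * S0⁻¹ * Yᵀ).det) := by
  have hS0inv : S0⁻¹.PosDef := hS0.inv
  have hid : ∀ (x y : Matrix (Fin n) (Fin n) ℝ) (a b : ℝ), a + b = 1 →
      ST - (a • x + b • y) * S0⁻¹ * (a • x + b • y)ᵀ
        = (a • (ST - x * S0⁻¹ * xᵀ) + b • (ST - y * S0⁻¹ * yᵀ))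
          + (a * b) • ((x - y) * S0⁻¹ * (x - y)ᵀ) := by
    intro x y a b hab
    obtain rfl : b = 1 - a := by linarith
    simp only [Matrix.transpose_add, Matrix.transpose_smul, Matrix.transpose_sub,
      Matrix.mul_add, Matrix.add_mul, Matrix.sub_mul, Matrix.mul_sub,
      smul_mul_assoc, mul_smul_comm]
    module
  have hQ : ∀ x y : Matrix (Fin n) (Fin n) ℝ, ((x - y) * S0⁻¹ * (x - y)ᵀ).PosSemidef := by
    intro x y
    have := hS0inv.posSemidef.mul_mul_conjTranspose_same (x - y)
    rwa [Matrix.conjTranspose_eq_transpose_of_trivial] at this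
  constructor
  · intro x hx y hy a b ha hb hab
    simp only [Set.mem_setOf_eq] at hx hy ⊢
    rw [hid x y a b hab]
    exact (my_combo_posDef hx hy ha hb hab).add_posSemidef
      (my_smul_posSemidef (hQ x y) (by positivity))
  · intro x hx y hy a b ha hb hab
    simp only [Set.mem_setOf_eq] at hx hy
    simp only [smul_eq_mul]
    rcases ha.eq_or_lt with h | h
    · obtain rfl : a = 0 := h.symm
      obtain rfl : b = 1 := by linarith
      simp
    · rcases hb.eq_or_lt with h2 | h2
      · obtain rfl : b = 0 := h2.symm
        obtain rfl : a = 1 := by linarith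
        simp
      · have hcombo : (a • (ST - x * S0⁻¹ * xᵀ) + b • (ST - y * S0⁻¹ * yᵀ)).PosDef :=
          my_combo_posDef hx hy ha hb hab
        calc a * Real.log (ST - x * S0⁻¹ * xᵀ).det + b * Real.log (ST - y * S0⁻¹ * yᵀ).det
            ≤ Real.log (a • (ST - x * S0⁻¹ * xᵀ) + b • (ST - y * S0⁻¹ * yᵀ)).det :=
              my_logdet_combo hx hy h h2 hab
          _ ≤ Real.log ((a • (ST - x * S0⁻¹ * xᵀ) + b • (ST - y * S0⁻¹ * yᵀ))
                + (a * b) • ((x - y) * S0⁻¹ * (x - y)ᵀ)).det :=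
              Real.log_le_log hcombo.det_pos
                (my_det_le_det_add hcombo (my_smul_posSemidef (hQ x y) (by positivity)))
          _ = Real.log (ST - (a • x + b • y) * S0⁻¹ * (a • x + b • y)ᵀ).det := by
              rw [← hid x y a b hab]
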